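/- The function g(r) = 1/((1+r)((1+r) ln(1+r) − r)) − 1 is strictly decreasing on (0, 1], and g(1) = (3 − 4 ln 2)/(2(2 ln 2 − 1)) > 0. -/

import Mathlib

private lemma log_lb (r : ℝ) (hr : 0 < r) : r / (1 + r) < Real.log (1 + r) := by
  have h1 : (0:ℝ) < 1 + r := by linarith
  have hne : -(r / (1 + r)) ≠ 0 := by
    have : 0 < r / (1 + r) := div_pos hr h1
    simpa using ne_of_gt this
  have hexp := Real.add_one_lt_exp hne
  have heq : -(r / (1 + r)) + 1 = 1 / (1 + r) := by field_simp; ring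
  rw [heq] at hexp
  have hlog := Real.log_lt_log (by positivity) hexp
  rw [Real.log_exp, Real.log_div one_ne_zero (ne_of_gt h1), Real.log_one] at hlog
  linarith

private lemma den_pos (r : ℝ) (hr : 0 < r) : 0 < (1 + r) * Real.log (1 + r) - r := by
  have h1 : (0:ℝ) < 1 + r := by linarith
  have := log_lb r hr
  have := (div_lt_iff₀ h1).mp this
  nlinarith

private lemma hasDeriv (x : ℝ) (hx : 0 < 1 + x) :
    HasDerivAt (fun r : ℝ => (1 + r) * ((1 + r) * Real.log (1 + r) - r))
      (2 * (1 + x) * Real.log (1 + x) - x) x := by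
  have h1 : HasDerivAt (fun r : ℝ => 1 + r) 1 x := by
    simpa using (hasDerivAt_id x).const_add 1
  have hlog : HasDerivAt (fun r : ℝ => Real.log (1 + r)) (1 / (1 + x)) x := by
    have := (Real.hasDerivAt_log (ne_of_gt hx)).comp x h1
    simpa [one_div, Function.comp_def] using this
  have hid : HasDerivAt (fun r : ℝ => r) 1 x := hasDerivAt_id x
  have hinner : HasDerivAt (fun r : ℝ => (1 + r) * Real.log (1 + r) - r)
      (1 * Real.log (1 + x) + (1 + x) * (1 / (1 + x)) - 1) x :=
    (h1.mul hlog).sub hid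
  have h := h1.mul hinner
  refine h.congr_deriv ?_
  rw [mul_one_div_cancel (ne_of_gt hx)]
  ring

private lemma mono : StrictMonoOn (fun r : ℝ => (1 + r) * ((1 + r) * Real.log (1 + r) - r))
    (Set.Icc (0:ℝ) 1) := by
  apply strictMonoOn_of_deriv_pos (convex_Icc 0 1)
  · intro x hx
    exact (hasDeriv x (by linarith [hx.1])).continuousAt.continuousWithinAt
  · intro x hx
    rw [interior_Icc] at hx
    have hx0 : 0 < x := hx.1
    have h1 : (0:ℝ) < 1 + x := by linarith
    rw [(hasDeriv x h1).deriv]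
    have := log_lb x hx0
    have := (div_lt_iff₀ h1).mp this
    nlinarith

/-- The function `g(r) = 1/((1+r)((1+r) ln(1+r) − r)) − 1` is strictly decreasing on
`(0,1]`, and `g(1) = (3 − 4 ln 2)/(2(2 ln 2 − 1)) > 0`. -/
theorem libera_bound_monotone :
    StrictAntiOn (fun r : ℝ => 1 / ((1 + r) * ((1 + r) * Real.log (1 + r) - r)) - 1)
      (Set.Ioc (0 : ℝ) 1) ∧
    (1 / ((1 + 1) * ((1 + 1) * Real.log (1 + 1) - 1)) - 1
        = (3 - 4 * Real.log 2) / (2 * (2 * Real.log 2 - 1))) ∧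
    0 < (3 - 4 * Real.log 2) / (2 * (2 * Real.log 2 - 1)) := by
  have hlog2 : 2 * Real.log 2 - 1 > 0 := by
    have := Real.log_two_gt_d9; linarith
  have hlog2' : 3 - 4 * Real.log 2 > 0 := by
    have := Real.log_two_lt_d9; linarith
  refine ⟨?_, ?_, ?_⟩
  · intro x hx y hy hxy
    have hfx : 0 < (1 + x) * ((1 + x) * Real.log (1 + x) - x) :=
      mul_pos (by linarith [hx.1]) (den_pos x hx.1)
    have hmono := mono (Set.mem_Icc.mpr ⟨le_of_lt hx.1, hx.2⟩)
      (Set.mem_Icc.mpr ⟨le_of_lt hy.1, hy.2⟩) hxy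
    have := one_div_lt_one_div_of_lt hfx hmono
    simpa using sub_lt_sub_right this 1
  · have h2 : (1:ℝ) + 1 = 2 := by norm_num
    rw [h2]
    rw [div_sub' (ne_of_gt (by linarith : (0:ℝ) < 2 * (2 * Real.log 2 - 1)))]
    have hne : (2:ℝ) * (2 * Real.log 2 - 1) ≠ 0 := by positivity
    rw [div_eq_div_iff (by positivity) (by positivity)]
    ring
  · positivity
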